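/- The corrected constant differs from the Linowitz–Thompson conjectured constant: Θ·(1−β) + α > θ, where θ = Σ_{k≥1} p_k²(p_k+2)/(2(p_k+1)²) · ∏_{j<k} (2+p_j(p_j+2))/(2(p_j+1)²). In particular θ < 4 < Θ·(1−β)+α. -/

import Mathlib

set_option maxRecDepth 40000
set_option maxHeartbeats 1000000

open Finset


set_option maxRecDepth 40000
set_option maxHeartbeats 1000000

open Finset

private lemma nthP {n v : ℕ} (hv : Nat.Prime v) (hc : Nat.count Nat.Prime v = n) :
    Nat.nth Nat.Prime n = v := hc ▸ Nat.nth_count hv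

lemma nth0 : Nat.nth Nat.Prime 0 = 2 := nthP (by norm_num) (by decide)
lemma nth1 : Nat.nth Nat.Prime 1 = 3 := nthP (by norm_num) (by decide)
lemma nth2 : Nat.nth Nat.Prime 2 = 5 := nthP (by norm_num) (by decide)
lemma nth3 : Nat.nth Nat.Prime 3 = 7 := nthP (by norm_num) (by decide)
lemma nth4 : Nat.nth Nat.Prime 4 = 11 := nthP (by norm_num) (by decide)
lemma nth5 : Nat.nth Nat.Prime 5 = 13 := nthP (by norm_num) (by decide)
lemma nth6 : Nat.nth Nat.Prime 6 = 17 := nthP (by norm_num) (by decide)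
lemma nth7 : Nat.nth Nat.Prime 7 = 19 := nthP (by norm_num) (by decide)
lemma nth8 : Nat.nth Nat.Prime 8 = 23 := nthP (by norm_num) (by decide)
lemma nth9 : Nat.nth Nat.Prime 9 = 29 := nthP (by norm_num) (by decide)
lemma nth10 : Nat.nth Nat.Prime 10 = 31 := nthP (by norm_num) (by decide)
lemma nth11 : Nat.nth Nat.Prime 11 = 37 := nthP (by norm_num) (by decide)
lemma nth12 : Nat.nth Nat.Prime 12 = 41 := nthP (by norm_num) (by decide)
lemma nth13 : Nat.nth Nat.Prime 13 = 43 := nthP (by norm_num) (by decide)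
lemma nth14 : Nat.nth Nat.Prime 14 = 47 := nthP (by norm_num) (by decide)
lemma nth15 : Nat.nth Nat.Prime 15 = 53 := nthP (by norm_num) (by decide)
lemma nth16 : Nat.nth Nat.Prime 16 = 59 := nthP (by norm_num) (by decide)
lemma nth17 : Nat.nth Nat.Prime 17 = 61 := nthP (by norm_num) (by decide)
lemma nth18 : Nat.nth Nat.Prime 18 = 67 := nthP (by norm_num) (by decide)
lemma nth19 : Nat.nth Nat.Prime 19 = 71 := nthP (by norm_num) (by decide)
lemma nth20 : Nat.nth Nat.Prime 20 = 73 := nthP (by norm_num) (by decide)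
lemma nth21 : Nat.nth Nat.Prime 21 = 79 := nthP (by norm_num) (by decide)
lemma nth22 : Nat.nth Nat.Prime 22 = 83 := nthP (by norm_num) (by decide)
lemma nth23 : Nat.nth Nat.Prime 23 = 89 := nthP (by norm_num) (by decide)
lemma nth24 : Nat.nth Nat.Prime 24 = 97 := nthP (by norm_num) (by decide)
lemma nth25 : Nat.nth Nat.Prime 25 = 101 := nthP (by norm_num) (by decide)
lemma nth26 : Nat.nth Nat.Prime 26 = 103 := nthP (by norm_num) (by decide)

lemma nth_prime_succ_le {n q : ℕ} (hq : q.Prime) (h : Nat.nth Nat.Prime n < q) :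
    Nat.nth Nat.Prime (n + 1) ≤ q := by
  have h1 : Nat.count Nat.Prime (Nat.nth Nat.Prime n + 1) = n + 1 :=
    Nat.count_nth_succ_of_infinite Nat.infinite_setOf_prime n
  have h2 : n + 1 < Nat.count Nat.Prime (q + 1) := by
    have hcs : Nat.count Nat.Prime (q + 1) = Nat.count Nat.Prime q + 1 := by
      rw [Nat.count_succ, if_pos hq]
    have hm : Nat.count Nat.Prime (Nat.nth Nat.Prime n + 1) ≤ Nat.count Nat.Prime q :=
      Nat.count_monotone _ h
    omega
  have := Nat.nth_lt_of_lt_count h2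
  omega

lemma nth_pos (n : ℕ) : 0 < Nat.nth Nat.Prime n :=
  (Nat.prime_nth_prime n).pos

lemma bertrand_nth (n : ℕ) : Nat.nth Nat.Prime (n + 1) ≤ 2 * Nat.nth Nat.Prime n := by
  obtain ⟨q, hq, h1, h2⟩ :=
    Nat.exists_prime_lt_and_le_two_mul (Nat.nth Nat.Prime n) (nth_pos n).ne'
  exact le_trans (nth_prime_succ_le hq h1) h2

lemma nth_le_pow2 (n : ℕ) : Nat.nth Nat.Prime n ≤ 2 ^ (n + 1) := by
  induction n with
  | zero => simp [nth0]
  | succ n ih =>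
      calc Nat.nth Nat.Prime (n + 1) ≤ 2 * Nat.nth Nat.Prime n := bertrand_nth n
      _ ≤ 2 * 2 ^ (n + 1) := by omega
      _ = 2 ^ (n + 2) := by ring

lemma nth_shift_le (m : ℕ) : 103 + m ≤ Nat.nth Nat.Prime (26 + m) := by
  induction m with
  | zero => simp [nth26]
  | succ m ih =>
      have h : Nat.nth Nat.Prime (26 + m) < Nat.nth Nat.Prime (26 + (m + 1)) :=
        Nat.nth_strictMono Nat.infinite_setOf_prime (by omega)
      omega

lemma nth_shift_ge (m : ℕ) : Nat.nth Nat.Prime (26 + m) ≤ 103 * 2 ^ m := by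
  induction m with
  | zero => simp [nth26]
  | succ m ih =>
      calc Nat.nth Nat.Prime (26 + (m + 1)) = Nat.nth Nat.Prime ((26 + m) + 1) := by ring_nf
      _ ≤ 2 * Nat.nth Nat.Prime (26 + m) := bertrand_nth _
      _ ≤ 2 * (103 * 2 ^ m) := by omega
      _ = 103 * 2 ^ (m + 1) := by ring

lemma erdos_nth (n : ℕ) :
    Nat.nth Nat.Prime n ≤ 4 ^ (Nat.count Nat.Prime (2 * n + 2) + 1) := by
  have key := one_half_le_sum_primes_ge_one_div (2 * n + 2)
  set B : ℕ := (4 ^ ((2 * n + 2).primesBelow.card + 1)).succ with hB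
  set S : Finset ℕ := B.primesBelow \ (2 * n + 2).primesBelow with hS
  have hterm : ∀ p ∈ S, (1 / p : ℝ) ≤ 1 / (2 * n + 2) := by
    intro p hp
    obtain ⟨hp1, hp2⟩ := Finset.mem_sdiff.mp hp
    have hpp : p.Prime := Nat.prime_of_mem_primesBelow hp1
    have hge : 2 * n + 2 ≤ p := by
      by_contra hlt
      exact hp2 (Nat.mem_primesBelow.mpr ⟨by omega, hpp⟩)
    apply one_div_le_one_div_of_le (by positivity)
    exact_mod_cast hge
  have hsum : (1 / 2 : ℝ) ≤ S.card * (1 / (2 * n + 2)) := by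
    calc (1 / 2 : ℝ) ≤ ∑ p ∈ S, (1 / p : ℝ) := key
    _ ≤ S.card * (1 / (2 * n + 2)) := by
        simpa using Finset.sum_le_card_nsmul S _ _ hterm
  have hcard : n + 1 ≤ S.card := by
    by_contra hc
    push_neg at hc
    have hc' : (S.card : ℝ) ≤ n := by exact_mod_cast Nat.lt_succ_iff.mp hc
    have hpos : (0 : ℝ) < 2 * n + 2 := by positivity
    have hne : (2 * (n:ℝ) + 2) ≠ 0 := by positivity
    rw [mul_one_div, le_div_iff₀ hpos] at hsum
    nlinarith [hsum, hc']
  have hcount : n + 1 ≤ Nat.count Nat.Prime B := by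
    have h1 : S.card ≤ B.primesBelow.card := Finset.card_le_card (Finset.sdiff_subset)
    have h2 : B.primesBelow.card = Nat.count Nat.Prime B :=
      Nat.primesBelow_card_eq_primeCounting' B
    omega
  have hlt : Nat.nth Nat.Prime n < B := Nat.nth_lt_of_lt_count (by omega)
  have hcc : (2 * n + 2).primesBelow.card = Nat.count Nat.Prime (2 * n + 2) :=
    Nat.primesBelow_card_eq_primeCounting' _
  rw [hB, hcc] at hlt
  omega

lemma count_upper (m : ℕ) : Nat.count Nat.Prime (211 + m) ≤ 94 + 48 * (m / 210) := by
  have h := Nat.primeCounting'_add_le (a := 210) (k := 211) (by norm_num) (by norm_num) m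
  have h211 : Nat.primeCounting' 211 = 46 := by decide
  have hphi : Nat.totient 210 = 48 := by decide
  rw [h211, hphi] at h
  exact le_trans h (by omega)

lemma global_nth (n : ℕ) : (Nat.nth Nat.Prime n : ℝ) ≤ 2 ^ 190 * (189 / 100) ^ n := by
  have hbase : (1 : ℝ) ≤ 189 / 100 := by norm_num
  rcases lt_or_ge n 105 with h | h
  · have h1 : Nat.nth Nat.Prime n ≤ 2 ^ (n + 1) := nth_le_pow2 n
    have h2 : ((2 : ℕ) ^ (n + 1) : ℝ) = (2 : ℝ) ^ (n + 1) := by push_cast; ring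
    calc (Nat.nth Nat.Prime n : ℝ) ≤ (2 : ℝ) ^ (n + 1) := by exact_mod_cast h1
    _ ≤ (2 : ℝ) ^ 190 := by
        apply pow_le_pow_right₀ (by norm_num)
        omega
    _ ≤ 2 ^ 190 * (189 / 100) ^ n := by
        nlinarith [one_le_pow₀ hbase (n := n), pow_pos (show (0:ℝ) < 2 by norm_num) 190]
  · set q : ℕ := (2 * n - 209) / 210 with hq
    have hm : 211 + (2 * n - 209) = 2 * n + 2 := by omega
    have h1 : Nat.count Nat.Prime (2 * n + 2) ≤ 94 + 48 * q := by
      have := count_upper (2 * n - 209)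
      rw [hm] at this
      exact this
    have h2 : Nat.nth Nat.Prime n ≤ 4 ^ (95 + 48 * q) := by
      refine le_trans (erdos_nth n) (Nat.pow_le_pow_right (by norm_num) (by omega))
    have hdiv : 210 * q ≤ 2 * n - 209 := by
      have := Nat.div_mul_le_self (2 * n - 209) 210
      omega
    have h3 : 105 * q + 105 ≤ n := by omega
    have hknum : ((4 : ℝ) ^ 48) ^ q ≤ ((189 / 100 : ℝ) ^ 105) ^ q := by
      apply pow_le_pow_left₀ (by positivity)
      norm_num
    calc (Nat.nth Nat.Prime n : ℝ) ≤ ((4 : ℕ) ^ (95 + 48 * q) : ℝ) := by exact_mod_cast h2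
    _ = (4 : ℝ) ^ 95 * ((4 : ℝ) ^ 48) ^ q := by push_cast; rw [pow_add, pow_mul]
    _ ≤ (4 : ℝ) ^ 95 * ((189 / 100 : ℝ) ^ 105) ^ q := by
        have : (0:ℝ) ≤ (4:ℝ)^95 := by positivity
        nlinarith [hknum]
    _ = 2 ^ 190 * (189 / 100) ^ (105 * q) := by
        rw [← pow_mul]
        norm_num
    _ ≤ 2 ^ 190 * (189 / 100) ^ n := by
        have : (189 / 100 : ℝ) ^ (105 * q) ≤ (189 / 100) ^ n :=
          pow_le_pow_right₀ hbase (by omega)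
        nlinarith [pow_pos (show (0:ℝ) < 2 by norm_num) 190]

/-- `P j` is the `(j+1)`-st prime (0-indexed), as a real number. -/
noncomputable def P (j : ℕ) : ℝ := (Nat.nth Nat.Prime j : ℝ)

/-- `Θ = Σ_{k≥1} p_k²/(2(p_k+1))·∏_{j<k}(p_j+2)/(2(p_j+1))` (0-indexed). -/
noncomputable def Theta : ℝ :=
  ∑' k : ℕ, (P k) ^ 2 / (2 * (P k + 1)) * ∏ j ∈ Finset.range k, (P j + 2) / (2 * (P j + 1))

/-- `α = Σ_{k≥1} p_k²/(2(p_k+1)²)·∏_{j<k}(p_j+2)/(2(p_j+1))` (0-indexed). -/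
noncomputable def alpha : ℝ :=
  ∑' k : ℕ, (P k) ^ 2 / (2 * (P k + 1) ^ 2) * ∏ j ∈ Finset.range k, (P j + 2) / (2 * (P j + 1))

/-- `β = Σ_{k≥1} p_k/(2(p_k+1)²)·∏_{j<k}(p_j+2)/(2(p_j+1))` (0-indexed). -/
noncomputable def beta : ℝ :=
  ∑' k : ℕ, P k / (2 * (P k + 1) ^ 2) * ∏ j ∈ Finset.range k, (P j + 2) / (2 * (P j + 1))

/-- Linowitz–Thompson's conjectured constant
`θ = Σ_{k≥1} p_k²(p_k+2)/(2(p_k+1)²)·∏_{j<k}(2+p_j(p_j+2))/(2(p_j+1)²)` (0-indexed). -/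
noncomputable def thetaLT : ℝ :=
  ∑' k : ℕ, (P k) ^ 2 * (P k + 2) / (2 * (P k + 1) ^ 2) *
    ∏ j ∈ Finset.range k, (2 + P j * (P j + 2)) / (2 * (P j + 1) ^ 2)



noncomputable def Rp (k : ℕ) : ℝ := ∏ j ∈ Finset.range k, (P j + 2) / (2 * (P j + 1))
noncomputable def Qp (k : ℕ) : ℝ := ∏ j ∈ Finset.range k, (2 + P j * (P j + 2)) / (2 * (P j + 1) ^ 2)
noncomputable def fT (k : ℕ) : ℝ := P k ^ 2 / (2 * (P k + 1)) * Rp k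
noncomputable def fA (k : ℕ) : ℝ := P k ^ 2 / (2 * (P k + 1) ^ 2) * Rp k
noncomputable def fB (k : ℕ) : ℝ := P k / (2 * (P k + 1) ^ 2) * Rp k
noncomputable def fL (k : ℕ) : ℝ := P k ^ 2 * (P k + 2) / (2 * (P k + 1) ^ 2) * Qp k

lemma Pr0 : P 0 = 2 := by rw [P, nth0]; norm_num
lemma Pr1 : P 1 = 3 := by rw [P, nth1]; norm_num
lemma Pr2 : P 2 = 5 := by rw [P, nth2]; norm_num
lemma Pr3 : P 3 = 7 := by rw [P, nth3]; norm_num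
lemma Pr4 : P 4 = 11 := by rw [P, nth4]; norm_num
lemma Pr5 : P 5 = 13 := by rw [P, nth5]; norm_num
lemma Pr6 : P 6 = 17 := by rw [P, nth6]; norm_num
lemma Pr7 : P 7 = 19 := by rw [P, nth7]; norm_num
lemma Pr8 : P 8 = 23 := by rw [P, nth8]; norm_num
lemma Pr9 : P 9 = 29 := by rw [P, nth9]; norm_num
lemma Pr10 : P 10 = 31 := by rw [P, nth10]; norm_num
lemma Pr11 : P 11 = 37 := by rw [P, nth11]; norm_num
lemma Pr12 : P 12 = 41 := by rw [P, nth12]; norm_num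
lemma Pr13 : P 13 = 43 := by rw [P, nth13]; norm_num
lemma Pr14 : P 14 = 47 := by rw [P, nth14]; norm_num
lemma Pr15 : P 15 = 53 := by rw [P, nth15]; norm_num
lemma Pr16 : P 16 = 59 := by rw [P, nth16]; norm_num
lemma Pr17 : P 17 = 61 := by rw [P, nth17]; norm_num
lemma Pr18 : P 18 = 67 := by rw [P, nth18]; norm_num
lemma Pr19 : P 19 = 71 := by rw [P, nth19]; norm_num
lemma Pr20 : P 20 = 73 := by rw [P, nth20]; norm_num
lemma Pr21 : P 21 = 79 := by rw [P, nth21]; norm_num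
lemma Pr22 : P 22 = 83 := by rw [P, nth22]; norm_num
lemma Pr23 : P 23 = 89 := by rw [P, nth23]; norm_num
lemma Pr24 : P 24 = 97 := by rw [P, nth24]; norm_num
lemma Pr25 : P 25 = 101 := by rw [P, nth25]; norm_num
lemma Pr26 : P 26 = 103 := by rw [P, nth26]; norm_num

lemma P_ge (k : ℕ) : (k : ℝ) + 2 ≤ P k := by
  have := Nat.add_two_le_nth_prime k
  rw [P]
  exact_mod_cast this

lemma two_le_P (k : ℕ) : 2 ≤ P k := by
  have h := P_ge k
  have : (0:ℝ) ≤ (k:ℝ) := Nat.cast_nonneg k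
  linarith

lemma P_pos (k : ℕ) : 0 < P k := lt_of_lt_of_le (by norm_num) (two_le_P k)
lemma P1_pos (k : ℕ) : 0 < P k + 1 := by linarith [P_pos k]

lemma P_shift_le (m : ℕ) : 103 + (m : ℝ) ≤ P (26 + m) := by
  have := nth_shift_le m
  rw [P]
  exact_mod_cast this

lemma P_shift_ge (m : ℕ) : P (26 + m) ≤ 103 * 2 ^ m := by
  have := nth_shift_ge m
  rw [P]
  exact_mod_cast this

lemma P_global (n : ℕ) : P n ≤ 2 ^ 190 * (189 / 100) ^ n := global_nth n

lemma Rp_succ (k : ℕ) : Rp (k + 1) = Rp k * ((P k + 2) / (2 * (P k + 1))) :=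
  Finset.prod_range_succ _ k

lemma Qp_succ (k : ℕ) : Qp (k + 1) = Qp k * ((2 + P k * (P k + 2)) / (2 * (P k + 1) ^ 2)) :=
  Finset.prod_range_succ _ k

lemma Rp_nonneg (k : ℕ) : 0 ≤ Rp k := by
  apply Finset.prod_nonneg
  intro j _
  have := P_pos j
  positivity

lemma Qp_nonneg (k : ℕ) : 0 ≤ Qp k := by
  apply Finset.prod_nonneg
  intro j _
  have h1 := P_pos j
  positivity

lemma Rp_le (k : ℕ) : Rp k ≤ ((k : ℝ) + 3) / 3 * (1 / 2) ^ k := by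
  induction k with
  | zero => norm_num [Rp]
  | succ k ih =>
      have hp := P_ge k
      have hp1 := P1_pos k
      have hk3 : (0:ℝ) < (k:ℝ) + 3 := by positivity
      have hfac : (P k + 2) / (2 * (P k + 1)) ≤ ((k:ℝ) + 4) / (2 * ((k:ℝ) + 3)) := by
        rw [div_le_div_iff₀ (by linarith) (by positivity)]
        nlinarith [hp]
      have hfacnn : 0 ≤ (P k + 2) / (2 * (P k + 1)) :=
        div_nonneg (by linarith) (by linarith)
      calc Rp (k+1) = Rp k * ((P k + 2) / (2 * (P k + 1))) := Rp_succ k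
      _ ≤ (((k : ℝ) + 3) / 3 * (1 / 2) ^ k) * (((k:ℝ) + 4) / (2 * ((k:ℝ) + 3))) := by
          apply mul_le_mul ih hfac hfacnn (by positivity)
      _ = ((k : ℝ) + 4) / 3 * (1 / 2) ^ (k+1) := by
          field_simp
          ring
      _ = (((k+1 : ℕ) : ℝ) + 3) / 3 * (1 / 2) ^ (k+1) := by push_cast; ring

lemma Qp_le (k : ℕ) : Qp k ≤ ((k : ℝ) + 3) / 3 * (1 / 2) ^ k := by
  induction k with
  | zero => norm_num [Qp]
  | succ k ih =>
      have hp := P_ge k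
      have hp1 := P1_pos k
      have hk3 : (0:ℝ) < (k:ℝ) + 3 := by positivity
      have hsq : ((k:ℝ) + 3) ≤ (P k + 1) ^ 2 := by nlinarith [hp]
      have hfac : (2 + P k * (P k + 2)) / (2 * (P k + 1) ^ 2) ≤ ((k:ℝ) + 4) / (2 * ((k:ℝ) + 3)) := by
        rw [div_le_div_iff₀ (by positivity) (by positivity)]
        nlinarith [hsq, hp]
      have hfacnn : 0 ≤ (2 + P k * (P k + 2)) / (2 * (P k + 1) ^ 2) := by
        apply div_nonneg ?_ (by positivity)
        nlinarith [P_pos k]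
      calc Qp (k+1) = Qp k * ((2 + P k * (P k + 2)) / (2 * (P k + 1) ^ 2)) := Qp_succ k
      _ ≤ (((k : ℝ) + 3) / 3 * (1 / 2) ^ k) * (((k:ℝ) + 4) / (2 * ((k:ℝ) + 3))) := by
          apply mul_le_mul ih hfac hfacnn (by positivity)
      _ = ((k : ℝ) + 4) / 3 * (1 / 2) ^ (k+1) := by
          field_simp
          ring
      _ = (((k+1 : ℕ) : ℝ) + 3) / 3 * (1 / 2) ^ (k+1) := by push_cast; ring

lemma Q26_le : Qp 26 ≤ 24 / 10 ^ 9 := by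
  rw [show (26:ℕ) = 25 + 1 from rfl]
  simp only [Qp, Finset.prod_range_succ, Finset.prod_range_zero,
    Pr0, Pr1, Pr2, Pr3, Pr4, Pr5, Pr6, Pr7, Pr8, Pr9, Pr10, Pr11, Pr12, Pr13, Pr14,
    Pr15, Pr16, Pr17, Pr18, Pr19, Pr20, Pr21, Pr22, Pr23, Pr24, Pr25]
  norm_num

lemma Qmid (m : ℕ) : Qp (26 + m) ≤
    24 / 10 ^ 9 * (104 / 103) * ((103 + (m:ℝ)) / (104 + (m:ℝ))) * (1 / 2) ^ m := by
  induction m with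
  | zero =>
      simpa using le_trans Q26_le (by norm_num)
  | succ m ih =>
      have hms : (26 + (m + 1)) = (26 + m) + 1 := by omega
      have hp : 103 + (m:ℝ) ≤ P (26 + m) := P_shift_le m
      have hP1 := P1_pos (26 + m)
      have hp1 : 104 + (m:ℝ) ≤ P (26 + m) + 1 := by linarith
      have hsq : (104 + (m:ℝ)) ^ 2 ≤ (P (26 + m) + 1) ^ 2 := by nlinarith [hp1]
      have hgnn : 0 ≤ (2 + P (26+m) * (P (26+m) + 2)) / (2 * (P (26+m) + 1) ^ 2) := by
        apply div_nonneg ?_ (by positivity)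
        nlinarith [P_pos (26+m)]
      have hgle : (2 + P (26+m) * (P (26+m) + 2)) / (2 * (P (26+m) + 1) ^ 2)
          ≤ ((104 + (m:ℝ)) ^ 2 + 1) / (2 * (104 + (m:ℝ)) ^ 2) := by
        rw [div_le_div_iff₀ (by positivity) (by positivity)]
        nlinarith [hsq]
      have hkey : ((103 + (m:ℝ)) / (104 + (m:ℝ))) * (((104 + (m:ℝ)) ^ 2 + 1) / (2 * (104 + (m:ℝ)) ^ 2))
          ≤ ((104 + (m:ℝ)) / (105 + (m:ℝ))) * (1 / 2) := by
        have h4 : (0:ℝ) < 104 + (m:ℝ) := by positivity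
        have h5 : (0:ℝ) < 105 + (m:ℝ) := by positivity
        have e1 : ((103 + (m:ℝ)) / (104 + (m:ℝ))) * (((104 + (m:ℝ)) ^ 2 + 1) / (2 * (104 + (m:ℝ)) ^ 2))
            = ((103 + (m:ℝ)) * ((104 + (m:ℝ)) ^ 2 + 1)) / ((104 + (m:ℝ)) * (2 * (104 + (m:ℝ)) ^ 2)) :=
          div_mul_div_comm _ _ _ _
        have e2 : ((104 + (m:ℝ)) / (105 + (m:ℝ))) * ((1:ℝ) / 2)
            = ((104 + (m:ℝ)) * 1) / ((105 + (m:ℝ)) * 2) := div_mul_div_comm _ _ _ _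
        rw [e1, e2, div_le_div_iff₀
          (show (0:ℝ) < (104 + (m:ℝ)) * (2 * (104 + (m:ℝ)) ^ 2) by positivity)
          (show (0:ℝ) < (105 + (m:ℝ)) * 2 by positivity)]
        nlinarith [sq_nonneg ((m:ℝ)), (Nat.cast_nonneg m : (0:ℝ) ≤ (m:ℝ)), sq_nonneg (104 + (m:ℝ))]
      have hQn : 0 ≤ 24 / 10 ^ 9 * (104 / 103) * (1/2:ℝ) ^ m := by positivity
      calc Qp (26 + (m+1))
          = Qp (26 + m) * ((2 + P (26+m) * (P (26+m) + 2)) / (2 * (P (26+m) + 1) ^ 2)) := by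
            rw [hms, Qp_succ]
      _ ≤ (24 / 10 ^ 9 * (104 / 103) * ((103 + (m:ℝ)) / (104 + (m:ℝ))) * (1 / 2) ^ m)
            * (((104 + (m:ℝ)) ^ 2 + 1) / (2 * (104 + (m:ℝ)) ^ 2)) := by
            apply mul_le_mul ih hgle hgnn (by positivity)
      _ = (24 / 10 ^ 9 * (104 / 103) * (1/2) ^ m) *
            (((103 + (m:ℝ)) / (104 + (m:ℝ))) * (((104 + (m:ℝ)) ^ 2 + 1) / (2 * (104 + (m:ℝ)) ^ 2))) := by
            ring
      _ ≤ (24 / 10 ^ 9 * (104 / 103) * (1/2) ^ m) *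
            (((104 + (m:ℝ)) / (105 + (m:ℝ))) * (1 / 2)) :=
            mul_le_mul_of_nonneg_left hkey hQn
      _ = 24 / 10 ^ 9 * (104 / 103) * ((103 + ((m+1:ℕ):ℝ)) / (104 + ((m+1:ℕ):ℝ))) * (1 / 2) ^ (m+1) := by
            push_cast
            rw [show (103 + ((m:ℝ)+1)) = 104 + (m:ℝ) from by ring,
              show (104 + ((m:ℝ)+1)) = 105 + (m:ℝ) from by ring]
            ring

lemma QmidC (m : ℕ) : Qp (26 + m) ≤ 25 / 10 ^ 9 * (1 / 2) ^ m := by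
  refine le_trans (Qmid m) ?_
  have h1 : (103 + (m:ℝ)) / (104 + (m:ℝ)) ≤ 1 := by
    rw [div_le_one (by positivity)]; linarith
  have h2 : (0:ℝ) ≤ (1/2:ℝ) ^ m := by positivity
  nlinarith [h1, h2]

lemma fT_nonneg (k : ℕ) : 0 ≤ fT k := by
  have h1 := P_pos k; have h2 := P1_pos k; have h3 := Rp_nonneg k
  apply mul_nonneg (by positivity) h3

lemma fA_nonneg (k : ℕ) : 0 ≤ fA k := by
  have h1 := P_pos k; have h2 := P1_pos k; have h3 := Rp_nonneg k
  apply mul_nonneg (by positivity) h3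

lemma fB_nonneg (k : ℕ) : 0 ≤ fB k := by
  have h1 := P_pos k; have h2 := P1_pos k; have h3 := Rp_nonneg k
  apply mul_nonneg (by positivity) h3

lemma fL_nonneg (k : ℕ) : 0 ≤ fL k := by
  have h1 := P_pos k; have h2 := P1_pos k; have h3 := Qp_nonneg k
  apply mul_nonneg (by positivity) h3

lemma fT_le (k : ℕ) : fT k ≤ P k / 2 * Rp k := by
  apply mul_le_mul_of_nonneg_right ?_ (Rp_nonneg k)
  have h2 := P1_pos k; have h1 := P_pos k
  rw [div_le_div_iff₀ (by positivity) (by norm_num)]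
  nlinarith

lemma fL_le (k : ℕ) : fL k ≤ P k / 2 * Qp k := by
  apply mul_le_mul_of_nonneg_right ?_ (Qp_nonneg k)
  have h2 := P1_pos k; have h1 := P_pos k
  rw [div_le_div_iff₀ (by positivity) (by norm_num)]
  nlinarith

lemma fA_le (k : ℕ) : fA k ≤ ((k:ℝ) + 3) / 6 * (1 / 2) ^ k := by
  have h2 := P1_pos k; have h1 := P_pos k
  have hfac : P k ^ 2 / (2 * (P k + 1) ^ 2) ≤ 1 / 2 := by
    rw [div_le_div_iff₀ (by positivity) (by norm_num)]
    nlinarith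
  calc fA k ≤ 1 / 2 * Rp k :=
        mul_le_mul_of_nonneg_right hfac (Rp_nonneg k)
  _ ≤ 1 / 2 * (((k:ℝ) + 3) / 3 * (1 / 2) ^ k) := by
        apply mul_le_mul_of_nonneg_left (Rp_le k) (by norm_num)
  _ = ((k:ℝ) + 3) / 6 * (1 / 2) ^ k := by ring

lemma fB_le (k : ℕ) : fB k ≤ (1 / 2) ^ k / 6 := by
  have h2 := P1_pos k; have h1 := P_pos k
  have hk3 : (k:ℝ) + 3 ≤ P k + 1 := by linarith [P_ge k]
  have hfac : P k / (2 * (P k + 1) ^ 2) ≤ 1 / (2 * ((k:ℝ) + 3)) := by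
    rw [div_le_div_iff₀ (by positivity) (by positivity)]
    nlinarith
  calc fB k ≤ 1 / (2 * ((k:ℝ) + 3)) * Rp k :=
        mul_le_mul_of_nonneg_right hfac (Rp_nonneg k)
  _ ≤ 1 / (2 * ((k:ℝ) + 3)) * (((k:ℝ) + 3) / 3 * (1 / 2) ^ k) := by
        apply mul_le_mul_of_nonneg_left (Rp_le k) (by positivity)
  _ = (1 / 2) ^ k / 6 := by
        field_simp
        ring

noncomputable def maj (k : ℕ) : ℝ := 2 ^ 190 * ((k:ℝ) + 3) * (189 / 200) ^ k

lemma summable_maj : Summable maj := by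
  have h1 : Summable (fun k : ℕ => (k:ℝ) * (189 / 200) ^ k) := by
    simpa using summable_pow_mul_geometric_of_norm_lt_one 1
      (r := (189 / 200 : ℝ)) (by rw [Real.norm_eq_abs]; rw [abs_of_nonneg] <;> norm_num)
  have h2 : Summable (fun k : ℕ => (3:ℝ) * (189 / 200) ^ k) :=
    (summable_geometric_of_lt_one (by norm_num) (by norm_num)).mul_left 3
  have h3 := (h1.add h2).mul_left ((2:ℝ) ^ 190)
  apply h3.congr
  intro k
  simp [maj]
  ring

lemma prod_le_maj (k : ℕ) : P k / 2 * (((k:ℝ) + 3) / 3 * (1 / 2) ^ k) ≤ maj k := by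
  have hg := P_global k
  have hq : (0:ℝ) ≤ (189/200 : ℝ)^k := by positivity
  have hk0 : (0:ℝ) ≤ (k:ℝ) := Nat.cast_nonneg k
  have e : (2 ^ 190 * (189 / 100) ^ k) / 2 * (((k:ℝ) + 3) / 3 * (1 / 2) ^ k)
      = (2:ℝ) ^ 190 * (((k:ℝ) + 3) / 6) * (189 / 200) ^ k := by
    rw [show ((189:ℝ)/200) = (189/100) * (1/2) from by norm_num, mul_pow]
    ring
  calc P k / 2 * (((k:ℝ) + 3) / 3 * (1 / 2) ^ k)
      ≤ (2 ^ 190 * (189 / 100) ^ k) / 2 * (((k:ℝ) + 3) / 3 * (1 / 2) ^ k) := by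
        apply mul_le_mul_of_nonneg_right (by linarith) (by positivity)
  _ = (2:ℝ) ^ 190 * (((k:ℝ) + 3) / 6) * (189 / 200) ^ k := e
  _ ≤ maj k := by
      unfold maj
      apply mul_le_mul_of_nonneg_right ?_ hq
      nlinarith [pow_pos (show (0:ℝ) < 2 by norm_num) 190]

lemma halfpow_le (k : ℕ) : ((1:ℝ)/2) ^ k ≤ (189/200 : ℝ) ^ k := by
  apply pow_le_pow_left₀ (by norm_num) (by norm_num)

lemma coeff_le (k : ℕ) : (1:ℝ) ≤ 2 ^ 190 * ((k:ℝ) + 3) := by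
  have hk0 : (0:ℝ) ≤ (k:ℝ) := Nat.cast_nonneg k
  nlinarith [pow_pos (show (0:ℝ) < 2 by norm_num) 190,
    one_le_pow₀ (show (1:ℝ) ≤ 2 by norm_num) (n := 190)]

lemma fT_le_maj (k : ℕ) : fT k ≤ maj k := by
  have hP2 : (0:ℝ) ≤ P k / 2 := by linarith [P_pos k]
  calc fT k ≤ P k / 2 * Rp k := fT_le k
  _ ≤ P k / 2 * (((k:ℝ) + 3) / 3 * (1 / 2) ^ k) :=
      mul_le_mul_of_nonneg_left (Rp_le k) hP2
  _ ≤ maj k := prod_le_maj k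

lemma fL_le_maj (k : ℕ) : fL k ≤ maj k := by
  have hP2 : (0:ℝ) ≤ P k / 2 := by linarith [P_pos k]
  calc fL k ≤ P k / 2 * Qp k := fL_le k
  _ ≤ P k / 2 * (((k:ℝ) + 3) / 3 * (1 / 2) ^ k) :=
      mul_le_mul_of_nonneg_left (Qp_le k) hP2
  _ ≤ maj k := prod_le_maj k

lemma fA_le_maj (k : ℕ) : fA k ≤ maj k := by
  have hk0 : (0:ℝ) ≤ (k:ℝ) := Nat.cast_nonneg k
  calc fA k ≤ ((k:ℝ) + 3) / 6 * (1 / 2) ^ k := fA_le k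
  _ ≤ (2 ^ 190 * ((k:ℝ) + 3)) * (189/200) ^ k := by
      apply mul_le_mul ?_ (halfpow_le k) (by positivity) (by positivity)
      nlinarith [pow_pos (show (0:ℝ) < 2 by norm_num) 190,
        one_le_pow₀ (show (1:ℝ) ≤ 2 by norm_num) (n := 190)]
  _ = maj k := rfl

lemma fB_le_maj (k : ℕ) : fB k ≤ maj k := by
  have hk0 : (0:ℝ) ≤ (k:ℝ) := Nat.cast_nonneg k
  calc fB k ≤ (1 / 2) ^ k / 6 := fB_le k
  _ ≤ (2 ^ 190 * ((k:ℝ) + 3)) * (189/200) ^ k := by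
      have h1 : ((1:ℝ)/2) ^ k / 6 ≤ (1/2) ^ k := by
        have : (0:ℝ) ≤ (1/2:ℝ)^k := by positivity
        linarith
      refine le_trans h1 (le_trans (halfpow_le k) ?_)
      nlinarith [coeff_le k, pow_pos (show (0:ℝ) < (189/200:ℝ) by norm_num) k,
        mul_le_mul_of_nonneg_right (coeff_le k)
          (pow_pos (show (0:ℝ) < (189/200:ℝ) by norm_num) k).le]
  _ = maj k := rfl

lemma summable_fT : Summable fT := summable_maj.of_nonneg_of_le fT_nonneg fT_le_maj
lemma summable_fA : Summable fA := summable_maj.of_nonneg_of_le fA_nonneg fA_le_maj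
lemma summable_fB : Summable fB := summable_maj.of_nonneg_of_le fB_nonneg fB_le_maj
lemma summable_fL : Summable fL := summable_maj.of_nonneg_of_le fL_nonneg fL_le_maj

lemma SL26 : ∑ k ∈ Finset.range 26, fL k ≤ 3.97503 := by
  simp only [fL, Qp, Finset.sum_range_succ, Finset.prod_range_succ, Finset.sum_range_zero,
    Finset.prod_range_zero,
    Pr0, Pr1, Pr2, Pr3, Pr4, Pr5, Pr6, Pr7, Pr8, Pr9, Pr10, Pr11, Pr12, Pr13, Pr14,
    Pr15, Pr16, Pr17, Pr18, Pr19, Pr20, Pr21, Pr22, Pr23, Pr24, Pr25]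
  norm_num

lemma ST13 : (496/100 : ℝ) ≤ ∑ k ∈ Finset.range 13, fT k := by
  simp only [fT, Rp, Finset.sum_range_succ, Finset.prod_range_succ, Finset.sum_range_zero,
    Finset.prod_range_zero,
    Pr0, Pr1, Pr2, Pr3, Pr4, Pr5, Pr6, Pr7, Pr8, Pr9, Pr10, Pr11, Pr12]
  norm_num

lemma SA13 : (774/1000 : ℝ) ≤ ∑ k ∈ Finset.range 13, fA k := by
  simp only [fA, Rp, Finset.sum_range_succ, Finset.prod_range_succ, Finset.sum_range_zero,
    Finset.prod_range_zero,
    Pr0, Pr1, Pr2, Pr3, Pr4, Pr5, Pr6, Pr7, Pr8, Pr9, Pr10, Pr11, Pr12]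
  norm_num

lemma SB13 : ∑ k ∈ Finset.range 13, fB k ≤ 22545/100000 := by
  simp only [fB, Rp, Finset.sum_range_succ, Finset.prod_range_succ, Finset.sum_range_zero,
    Finset.prod_range_zero,
    Pr0, Pr1, Pr2, Pr3, Pr4, Pr5, Pr6, Pr7, Pr8, Pr9, Pr10, Pr11, Pr12]
  norm_num

lemma geom_Ico (N n : ℕ) {q : ℝ} (h0 : 0 ≤ q) (h1 : q < 1) :
    ∑ k ∈ Finset.Ico N n, q ^ k ≤ q ^ N / (1 - q) := by
  have hsum : ∑ k ∈ Finset.range (n - N), q ^ k ≤ (1 - q)⁻¹ :=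
    le_trans ((summable_geometric_of_lt_one h0 h1).sum_le_tsum (Finset.range (n - N)) (fun i _ => by positivity)
      )
      (le_of_eq (tsum_geometric_of_lt_one h0 h1))
  have e : ∑ k ∈ Finset.Ico N n, q ^ k = q ^ N * ∑ k ∈ Finset.range (n - N), q ^ k := by
    rw [Finset.sum_Ico_eq_sum_range, Finset.mul_sum]
    exact Finset.sum_congr rfl fun i _ => pow_add q N i
  rw [e, div_eq_mul_inv]
  exact mul_le_mul_of_nonneg_left hsum (by positivity)

lemma fL_mid (m : ℕ) : fL (26 + m) ≤ 2575 / (2 * 10 ^ 9 : ℝ) := by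
  have h1 : P (26 + m) / 2 ≤ 103 * (2:ℝ) ^ m / 2 := by linarith [P_shift_ge m]
  have h2 := QmidC m
  have hQn := Qp_nonneg (26 + m)
  have hPn : (0:ℝ) ≤ P (26 + m) / 2 := by linarith [P_pos (26 + m)]
  calc fL (26 + m) ≤ P (26 + m) / 2 * Qp (26 + m) := fL_le (26 + m)
  _ ≤ (103 * (2:ℝ) ^ m / 2) * (25 / 10 ^ 9 * (1 / 2) ^ m) := by
      apply mul_le_mul h1 h2 hQn (by positivity)
  _ = 2575 / (2 * 10 ^ 9 : ℝ) * ((2:ℝ) * (1/2)) ^ m := by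
      rw [mul_pow]
      ring
  _ = 2575 / (2 * 10 ^ 9 : ℝ) := by norm_num

lemma fL_far (k : ℕ) (hk : 26 ≤ k) : fL k ≤ 25 / 10 ^ 9 * 2 ^ 215 * ((189:ℝ) / 200) ^ k := by
  obtain ⟨m, rfl⟩ : ∃ m, k = 26 + m := ⟨k - 26, by omega⟩
  have h1 : P (26 + m) / 2 ≤ (2 ^ 190 * (189 / 100) ^ (26 + m)) / 2 := by
    linarith [P_global (26 + m)]
  have h2 := QmidC m
  have hQn := Qp_nonneg (26 + m)
  have hPn : (0:ℝ) ≤ P (26 + m) / 2 := by linarith [P_pos (26 + m)]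
  calc fL (26 + m) ≤ P (26 + m) / 2 * Qp (26 + m) := fL_le (26 + m)
  _ ≤ ((2 ^ 190 * (189 / 100) ^ (26 + m)) / 2) * (25 / 10 ^ 9 * (1 / 2) ^ m) := by
      apply mul_le_mul h1 h2 hQn (by positivity)
  _ = 25 / 10 ^ 9 * 2 ^ 215 * ((189:ℝ) / 200) ^ (26 + m) := by
      rw [show ((189:ℝ)/200) = (189/100) * (1/2) from by norm_num, mul_pow]
      rw [pow_add ((1:ℝ)/2) 26 m]
      ring

lemma SL_all (n : ℕ) : ∑ k ∈ Finset.range n, fL k ≤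
    3.97503 + 2574 * (2575 / (2 * 10 ^ 9)) + 25 / 10 ^ 9 * 2 ^ 215 * ((189:ℝ)/200) ^ 2600 / (1 - 189/200) := by
  have hfar_nn : (0:ℝ) ≤ 25 / 10 ^ 9 * 2 ^ 215 * ((189:ℝ)/200) ^ 2600 / (1 - 189/200) := by positivity
  have hmid_nn : (0:ℝ) ≤ 2575 / (2 * 10 ^ 9 : ℝ) := by positivity
  have hhead : ∀ m ≤ 26, ∑ k ∈ Finset.range m, fL k ≤ 3.97503 := by
    intro m hm
    refine le_trans (Finset.sum_le_sum_of_subset_of_nonneg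
      (Finset.range_subset_range.mpr hm) (fun i _ _ => fL_nonneg i)) SL26
  have hmid : ∀ a b : ℕ, 26 ≤ a → b ≤ 2600 →
      ∑ k ∈ Finset.Ico a b, fL k ≤ 2574 * (2575 / (2 * 10 ^ 9)) := by
    intro a b ha hb
    calc ∑ k ∈ Finset.Ico a b, fL k ≤ ∑ k ∈ Finset.Ico a b, (2575 / (2 * 10 ^ 9) : ℝ) := by
          apply Finset.sum_le_sum
          intro k hk
          have h26 : 26 ≤ k := le_trans ha (Finset.mem_Ico.mp hk).1
          obtain ⟨m, rfl⟩ : ∃ m, k = 26 + m := ⟨k - 26, by omega⟩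
          exact fL_mid m
    _ = (b - a : ℕ) * (2575 / (2 * 10 ^ 9)) := by
          rw [Finset.sum_const, Nat.card_Ico, nsmul_eq_mul]
    _ ≤ 2574 * (2575 / (2 * 10 ^ 9)) := by
          apply mul_le_mul_of_nonneg_right ?_ hmid_nn
          have : (b - a : ℕ) ≤ 2574 := by omega
          exact_mod_cast this
  have hfar : ∀ n : ℕ, ∑ k ∈ Finset.Ico 2600 n, fL k ≤
      25 / 10 ^ 9 * 2 ^ 215 * ((189:ℝ)/200) ^ 2600 / (1 - 189/200) := by
    intro n
    calc ∑ k ∈ Finset.Ico 2600 n, fL k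
        ≤ ∑ k ∈ Finset.Ico 2600 n, 25 / 10 ^ 9 * 2 ^ 215 * ((189:ℝ)/200) ^ k := by
          apply Finset.sum_le_sum
          intro k hk
          exact fL_far k (by have := (Finset.mem_Ico.mp hk).1; omega)
    _ = 25 / 10 ^ 9 * 2 ^ 215 * ∑ k ∈ Finset.Ico 2600 n, ((189:ℝ)/200) ^ k := by
          rw [Finset.mul_sum]
    _ ≤ 25 / 10 ^ 9 * 2 ^ 215 * (((189:ℝ)/200) ^ 2600 / (1 - 189/200)) := by
          apply mul_le_mul_of_nonneg_left (geom_Ico 2600 n (by norm_num) (by norm_num))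
            (by positivity)
    _ = 25 / 10 ^ 9 * 2 ^ 215 * ((189:ℝ)/200) ^ 2600 / (1 - 189/200) := by ring
  rcases le_or_gt n 26 with h26 | h26
  · linarith [hhead n h26]
  rcases le_or_gt n 2600 with h2600 | h2600
  · have hsplit : ∑ k ∈ Finset.range 26, fL k + ∑ k ∈ Finset.Ico 26 n, fL k
        = ∑ k ∈ Finset.range n, fL k := by
      simp only [Finset.range_eq_Ico]
      exact Finset.sum_Ico_consecutive _ (show (0:ℕ) ≤ 26 by omega) (show (26:ℕ) ≤ n by omega)
    have h1 := hmid 26 n (le_refl 26) h2600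
    linarith [hhead 26 (le_refl 26), hsplit, h1]
  · have hsplit : ∑ k ∈ Finset.range 26, fL k + ∑ k ∈ Finset.Ico 26 2600, fL k
        + ∑ k ∈ Finset.Ico 2600 n, fL k = ∑ k ∈ Finset.range n, fL k := by
      simp only [Finset.range_eq_Ico]
      rw [Finset.sum_Ico_consecutive _ (show (0:ℕ) ≤ 26 by omega) (show (26:ℕ) ≤ 2600 by omega)]
      exact Finset.sum_Ico_consecutive _ (show (0:ℕ) ≤ 2600 by omega) (show (2600:ℕ) ≤ n by omega)
    have h1 := hmid 26 2600 (le_refl 26) (le_refl 2600)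
    linarith [hhead 26 (le_refl 26), hsplit, h1, hfar n]

lemma thetaLT_le : thetaLT ≤ 3.99 := by
  have heq : thetaLT = ∑' k, fL k := rfl
  rw [heq]
  apply Real.tsum_le_of_sum_range_le fL_nonneg
  intro n
  refine le_trans (SL_all n) (by
    have h100 : ((189:ℝ)/200)^100 ≤ 1/250 := by norm_num
    have h : ((189:ℝ)/200)^2600 ≤ (1/250)^26 := by
      rw [show 2600 = 100*26 by norm_num, pow_mul]; exact pow_le_pow_left₀ (by positivity) h100 26
    generalize ((189:ℝ)/200)^2600 = X at h ⊢
    norm_num at h ⊢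
    linarith)

lemma beta_le : beta ≤ 0.2255 := by
  have heq : beta = ∑' k, fB k := rfl
  rw [heq]
  apply Real.tsum_le_of_sum_range_le fB_nonneg
  intro n
  have htail : ∀ n : ℕ, ∑ k ∈ Finset.Ico 13 n, fB k ≤ (1/6 : ℝ) * ((1/2)^13 / (1 - 1/2)) := by
    intro n
    calc ∑ k ∈ Finset.Ico 13 n, fB k ≤ ∑ k ∈ Finset.Ico 13 n, (1/6 : ℝ) * (1/2) ^ k := by
          apply Finset.sum_le_sum
          intro k _
          have := fB_le k
          linarith
    _ = (1/6 : ℝ) * ∑ k ∈ Finset.Ico 13 n, ((1:ℝ)/2) ^ k := by rw [Finset.mul_sum]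
    _ ≤ (1/6 : ℝ) * ((1/2)^13 / (1 - 1/2)) := by
          apply mul_le_mul_of_nonneg_left (geom_Ico 13 n (by norm_num) (by norm_num)) (by norm_num)
  rcases le_or_gt n 13 with h13 | h13
  · refine le_trans (Finset.sum_le_sum_of_subset_of_nonneg
      (Finset.range_subset_range.mpr h13) (fun i _ _ => fB_nonneg i)) (le_trans SB13 (by norm_num))
  · have hsplit : ∑ k ∈ Finset.range 13, fB k + ∑ k ∈ Finset.Ico 13 n, fB k
        = ∑ k ∈ Finset.range n, fB k := by
      simp only [Finset.range_eq_Ico]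
      exact Finset.sum_Ico_consecutive _ (show (0:ℕ) ≤ 13 by omega) (show (13:ℕ) ≤ n by omega)
    have h1 := htail n
    have h2 := SB13
    rw [← hsplit]
    norm_num
    linarith

lemma Theta_ge : (496/100 : ℝ) ≤ Theta := by
  have heq : Theta = ∑' k, fT k := rfl
  rw [heq]
  exact le_trans ST13 (summable_fT.sum_le_tsum (Finset.range 13) (fun i _ => fT_nonneg i))

lemma alpha_ge : (774/1000 : ℝ) ≤ alpha := by
  have heq : alpha = ∑' k, fA k := rfl
  rw [heq]
  exact le_trans SA13 (summable_fA.sum_le_tsum (Finset.range 13) (fun i _ => fA_nonneg i))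

lemma beta_nonneg : 0 ≤ beta := tsum_nonneg fB_nonneg


/-- The corrected constant exceeds the conjectured one: `θ < 4 < Θ·(1−β)+α`. -/
theorem corrected_exceeds_conjectured :
    thetaLT < Theta * (1 - beta) + alpha ∧ thetaLT < 4 ∧ 4 < Theta * (1 - beta) + alpha := by
  have h1 : thetaLT < 4 := lt_of_le_of_lt thetaLT_le (by norm_num)
  have hT := Theta_ge
  have hB := beta_le
  have hB0 := beta_nonneg
  have hA := alpha_ge
  have hmul : (496/100 : ℝ) * (1 - 0.2255) ≤ Theta * (1 - beta) := by
    apply mul_le_mul hT (by linarith) (by norm_num) (by linarith)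
  have h2 : (4:ℝ) < Theta * (1 - beta) + alpha := by nlinarith [hmul]
  exact ⟨lt_trans h1 h2, h1, h2⟩
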